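/- Let Q ⊆ ℝ^d be a compact convex set covered by an arbitrary (possibly infinite) family of open half-spaces. Then there exists a finite subfamily of at most d+1 of these half-spaces that also covers Q. -/
import Mathlib

theorem stmt_4 {ι : Type*} (d : ℕ) (Q : Set (Fin d → ℝ))
    (hQc : IsCompact Q) (hQconv : Convex ℝ Q)
    (a : ι → (Fin d → ℝ)) (c : ι → ℝ) (ha : ∀ i, a i ≠ 0)
    (hcov : Q ⊆ ⋃ i, {x : Fin d → ℝ | ∑ k, a i k * x k < c i}) :
    ∃ t : Finset ι, t.card ≤ d + 1 ∧
      Q ⊆ ⋃ i ∈ t, {x : Fin d → ℝ | ∑ k, a i k * x k < c i} := by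
  classical
  set U : ι → Set (Fin d → ℝ) := fun i => {x | ∑ k, a i k * x k < c i} with hU
  have hlin : ∀ i, IsLinearMap ℝ (fun x : Fin d → ℝ => ∑ k, a i k * x k) := by
    intro i
    constructor
    · intro x y; simp [mul_add, Finset.sum_add_distrib]
    · intro r x; simp [Finset.mul_sum, mul_comm, mul_left_comm]
  have hUopen : ∀ i, IsOpen (U i) := fun i =>
    isOpen_lt (by fun_prop) continuous_const
  obtain ⟨t₀, ht₀⟩ := hQc.elim_finite_subcover U hUopen hcov
  -- Helly setup
  set F : Option ι → Set (Fin d → ℝ) := fun o =>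
    o.elim Q (fun i => {x | c i ≤ ∑ k, a i k * x k}) with hF
  set s : Finset (Option ι) := insert none (t₀.image some) with hs
  have hconv : ∀ o ∈ s, Convex ℝ (F o) := by
    rintro (_ | i) _
    · exact hQconv
    · exact convex_halfSpace_ge (hlin i) (c i)
  have hempty : ¬ (⋂ o ∈ s, F o).Nonempty := by
    rintro ⟨x, hx⟩
    simp only [hs, Finset.mem_insert, Set.mem_iInter] at hx
    have hxQ : x ∈ Q := hx none (Or.inl rfl)
    obtain ⟨_, ⟨i, rfl⟩, _, ⟨hi, rfl⟩, hxi⟩ := ht₀ hxQ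
    have hle : c i ≤ ∑ k, a i k * x k := hx (some i) (Or.inr (Finset.mem_image_of_mem _ hi))
    exact absurd hle (not_le.mpr hxi)
  have hrank : Module.finrank ℝ (Fin d → ℝ) = d := by simp
  have : ¬ ∀ I ⊆ s, I.card ≤ Module.finrank ℝ (Fin d → ℝ) + 1 →
      (⋂ o ∈ I, F o).Nonempty := fun h => hempty (Convex.helly_theorem' hconv h)
  push_neg at this
  obtain ⟨I, hIs, hIcard, hIempty⟩ := this
  rw [hrank] at hIcard
  refine ⟨t₀.filter (fun i => some i ∈ I), ?_, ?_⟩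
  · refine le_trans (Finset.card_le_card_of_injOn some ?_ ?_) hIcard
    · intro i hi; exact (Finset.mem_filter.mp hi).2
    · intro i _ j _ h; exact Option.some_injective _ h
  · intro x hxQ
    have : x ∉ ⋂ o ∈ I, F o := by rw [hIempty]; exact Set.notMem_empty x
    simp only [Set.mem_iInter, not_forall] at this
    obtain ⟨o, hoI, hxo⟩ := this
    match o with
    | none => exact absurd hxQ hxo
    | some i =>
        refine Set.mem_biUnion (x := i) ?_ ?_
        · refine Finset.mem_filter.mpr ⟨?_, hoI⟩
          have := hIs hoI
          simp only [hs, Finset.mem_insert, Finset.mem_image] at this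
          rcases this with h | ⟨j, hj, hji⟩
          · exact absurd h (by simp)
          · cases Option.some_injective _ hji; exact hj
        · have : ¬ c i ≤ ∑ k, a i k * x k := hxo
          exact not_le.mp this
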